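/- The sets V(f_{r,k}) satisfy the recursion Z(k) = Z(k−1)·(q^r − (q−1)^r) + (q^{(k−1)r} − Z(k−1))·(q−1)^{r−1} for k ≥ 2, where Z(k) denotes the cardinality of V(f_{r,k}). -/

import Mathlib

/-- Index of the `i`-th variable of the `j`-th block of `r` variables inside `Fin (r*k)`. -/
def mIdx (r k : ℕ) (j : Fin k) (i : Fin r) : Fin (r * k) :=
  ⟨j.1 * r + i.1, by
    have hj := j.2; have hi := i.2
    calc j.1 * r + i.1 < (j.1 + 1) * r := by nlinarith
      _ ≤ k * r := Nat.mul_le_mul_right r hj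
      _ = r * k := Nat.mul_comm _ _⟩

/-- `f_{r,k}(x) = Σ_{j=0}^{k-1} x_{jr+1} ⋯ x_{jr+r}`. -/
def frk (F : Type) [Field F] (r k : ℕ) (x : Fin (r * k) → F) : F :=
  ∑ j : Fin k, ∏ i : Fin r, x (mIdx r k j i)

open Finset

section aux
variable {F : Type} [Field F] [Fintype F] [DecidableEq F]

lemma count_ne_zero' (r : ℕ) :
    (univ.filter fun z : Fin r → F => ¬ ∏ i, z i = 0).card = (Fintype.card F - 1) ^ r := by
  have : (univ.filter fun z : Fin r → F => ¬ ∏ i, z i = 0)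
      = Fintype.piFinset (fun _ : Fin r => univ.erase 0) := by
    ext z
    simp [Finset.prod_ne_zero_iff, Fintype.mem_piFinset]
  rw [this, Fintype.card_piFinset]
  simp [Finset.card_erase_of_mem]

lemma count_eq_zero' (r : ℕ) :
    (univ.filter fun z : Fin r → F => ∏ i, z i = 0).card
      = Fintype.card F ^ r - (Fintype.card F - 1) ^ r := by
  have h := Finset.card_filter_add_card_filter_not
    (s := (univ : Finset (Fin r → F))) (p := fun z => ∏ i, z i = 0)
  have h2 := count_ne_zero' (F := F) r
  have hc : (univ : Finset (Fin r → F)).card = Fintype.card F ^ r := by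
    simp [Fintype.card_fun]
  rw [h2, hc] at h
  exact Nat.eq_sub_of_add_eq h

lemma count_eq_c' (n : ℕ) (c : F) (hc : c ≠ 0) :
    (univ.filter fun z : Fin (n+1) → F => ∏ i, z i = c).card = (Fintype.card F - 1) ^ n := by
  rw [← Fintype.card_subtype]
  have e : {z : Fin (n+1) → F // ∏ i, z i = c} ≃ (Fin n → {x : F // x ≠ 0}) := by
    refine ⟨fun z i => ⟨z.1 i.castSucc, ?_⟩,
      fun w => ⟨Fin.snoc (fun i => (w i).1) (c / ∏ i, (w i).1), ?_⟩, ?_, ?_⟩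
    · have hz : ∏ i, z.1 i ≠ 0 := by rw [z.2]; exact hc
      exact Finset.prod_ne_zero_iff.mp hz i.castSucc (Finset.mem_univ _)
    · have hw : ∏ i, (w i).1 ≠ 0 := Finset.prod_ne_zero_iff.mpr (fun i _ => (w i).2)
      rw [Fin.prod_univ_castSucc]
      simp only [Fin.snoc_castSucc, Fin.snoc_last]
      field_simp
    · rintro ⟨z, hz⟩
      have hz' : ∏ i, z i ≠ 0 := by rw [hz]; exact hc
      have hlast : z (Fin.last n) ≠ 0 :=
        Finset.prod_ne_zero_iff.mp hz' (Fin.last n) (Finset.mem_univ _)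
      have hcs : ∏ i : Fin n, z i.castSucc ≠ 0 := by
        rw [Fin.prod_univ_castSucc] at hz'
        exact fun h => hz' (by rw [h, zero_mul])
      ext t
      simp only []
      refine Fin.lastCases ?_ ?_ t
      · rw [Fin.snoc_last]
        rw [Fin.prod_univ_castSucc] at hz
        field_simp
        rw [← hz]
      · intro i; rw [Fin.snoc_castSucc]
    · intro w
      funext i
      ext
      simp [Fin.snoc_castSucc]
  rw [Fintype.card_congr e]
  have : Fintype.card {x : F // x ≠ 0} = Fintype.card F - 1 := by
    simp [Fintype.card_subtype_compl]
  simp [Fintype.card_fun, this]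

end aux

/-- Splitting the variables of `f_{r,m+1}` into the first `m` blocks and the last block. -/
def splitE (F : Type) (r m : ℕ) :
    ((Fin (r * m) → F) × (Fin r → F)) ≃ (Fin (r * (m + 1)) → F) where
  toFun p t :=
    if h : t.1 < r * m then p.1 ⟨t.1, h⟩
    else p.2 ⟨t.1 - r * m, by
      have ht := t.2
      have h2 : r * (m + 1) = r * m + r := by ring
      omega⟩
  invFun x :=
    (fun i => x ⟨i.1, by
        have hi := i.2
        have h2 : r * (m + 1) = r * m + r := by ring
        omega⟩,
     fun i => x ⟨r * m + i.1, by
        have hi := i.2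
        have h2 : r * (m + 1) = r * m + r := by ring
        omega⟩)
  left_inv p := by
    obtain ⟨y, z⟩ := p
    simp only [Prod.mk.injEq]
    constructor
    · funext i
      rw [dif_pos i.2]
    · funext i
      rw [dif_neg (by omega)]
      congr 1
      ext
      simp
  right_inv x := by
    funext t
    dsimp only
    by_cases h : t.1 < r * m
    · rw [dif_pos h]
    · rw [dif_neg h]
      congr 1
      ext
      simp only []
      omega

lemma frk_split (F : Type) [Field F] (r m : ℕ) (y : Fin (r * m) → F) (z : Fin r → F) :
    frk F r (m + 1) (splitE F r m (y, z)) = frk F r m y + ∏ i, z i := by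
  unfold frk
  rw [Fin.sum_univ_castSucc]
  congr 1
  · refine Finset.sum_congr rfl fun j _ => Finset.prod_congr rfl fun i _ => ?_
    show splitE F r m (y, z) (mIdx r (m + 1) j.castSucc i) = y (mIdx r m j i)
    have hlt : (mIdx r (m + 1) j.castSucc i).1 < r * m := by
      have hj := j.2; have hi := i.2
      show j.1 * r + i.1 < r * m
      calc j.1 * r + i.1 < (j.1 + 1) * r := by nlinarith
        _ ≤ m * r := Nat.mul_le_mul_right r hj
        _ = r * m := Nat.mul_comm _ _
    show (if h : (mIdx r (m + 1) j.castSucc i).1 < r * m then y ⟨_, h⟩ else _) = _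
    rw [dif_pos hlt]
    rfl
  · refine Finset.prod_congr rfl fun i _ => ?_
    show splitE F r m (y, z) (mIdx r (m + 1) (Fin.last m) i) = z i
    have hge : ¬ (mIdx r (m + 1) (Fin.last m) i).1 < r * m := by
      show ¬ m * r + i.1 < r * m
      rw [Nat.mul_comm m r]
      omega
    show (if h : (mIdx r (m + 1) (Fin.last m) i).1 < r * m then _ else z ⟨_, _⟩) = z i
    rw [dif_neg hge]
    congr 1
    ext
    show m * r + i.1 - r * m = i.1
    rw [Nat.mul_comm m r]
    omega

theorem stmt2 (F : Type) [Field F] [Fintype F] [DecidableEq F] (r : ℕ) (hr : 1 ≤ r)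
    (Z : ℕ → ℕ)
    (hZ : ∀ m, Z m = (Finset.univ.filter (fun x : Fin (r * m) → F => frk F r m x = 0)).card) :
    ∀ k, 2 ≤ k →
      Z k = Z (k - 1) * (Fintype.card F ^ r - (Fintype.card F - 1) ^ r) +
        (Fintype.card F ^ ((k - 1) * r) - Z (k - 1)) * (Fintype.card F - 1) ^ (r - 1) := by
  intro k hk
  obtain ⟨m, rfl⟩ : ∃ m, k = m + 1 := ⟨k - 1, by omega⟩
  obtain ⟨n, rfl⟩ : ∃ n, r = n + 1 := ⟨r - 1, by omega⟩
  set r := n + 1 with hrdef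
  set q := Fintype.card F with hq
  simp only [Nat.add_sub_cancel]
  -- express Z (m+1) as a sum over the first m blocks
  have h1 : Z (m + 1) = ∑ y : Fin (r * m) → F,
      (univ.filter fun z : Fin r → F => ∏ i, z i = - frk F r m y).card := by
    rw [hZ (m + 1), ← Fintype.card_subtype]
    have e1 : {x : Fin (r * (m + 1)) → F // frk F r (m + 1) x = 0}
        ≃ {p : (Fin (r * m) → F) × (Fin r → F) // frk F r (m + 1) (splitE F r m p) = 0} :=
      (Equiv.subtypeEquiv (splitE F r m) (fun p => Iff.rfl)).symm
    rw [Fintype.card_congr e1]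
    have e2 : {p : (Fin (r * m) → F) × (Fin r → F) // frk F r (m + 1) (splitE F r m p) = 0}
        ≃ Σ y : Fin (r * m) → F, {z : Fin r → F // ∏ i, z i = - frk F r m y} := by
      refine Equiv.trans ?_ (Equiv.subtypeProdEquivSigmaSubtype
        (fun (y : Fin (r * m) → F) (z : Fin r → F) => ∏ i, z i = - frk F r m y))
      apply Equiv.subtypeEquivRight
      intro p
      obtain ⟨y, z⟩ := p
      rw [frk_split]
      constructor
      · intro h; linear_combination h
      · intro h; linear_combination h
    rw [Fintype.card_congr e2, Fintype.card_sigma]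
    refine Finset.sum_congr rfl fun y _ => ?_
    rw [Fintype.card_subtype]
  rw [h1]
  -- compute each summand by cases
  have h2 : ∀ y : Fin (r * m) → F,
      (univ.filter fun z : Fin r → F => ∏ i, z i = - frk F r m y).card
        = if frk F r m y = 0 then q ^ r - (q - 1) ^ r else (q - 1) ^ n := by
    intro y
    by_cases hy : frk F r m y = 0
    · rw [if_pos hy]
      simp only [hy, neg_zero]
      rw [count_eq_zero']
    · rw [if_neg hy]
      exact count_eq_c' n _ (neg_ne_zero.mpr hy)
  simp only [h2]
  rw [Finset.sum_ite, Finset.sum_const, Finset.sum_const, smul_eq_mul, smul_eq_mul]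
  have hZm : Z m = (univ.filter fun y : Fin (r * m) → F => frk F r m y = 0).card := hZ m
  have hsplit := Finset.card_filter_add_card_filter_not
    (s := (univ : Finset (Fin (r * m) → F))) (p := fun y => frk F r m y = 0)
  have hcardu : (univ : Finset (Fin (r * m) → F)).card = q ^ (r * m) := by
    simp [Fintype.card_fun, hq]
  rw [hcardu, ← hZm] at hsplit
  have hneg : (univ.filter fun y : Fin (r * m) → F => ¬ frk F r m y = 0).card
      = q ^ (m * r) - Z m := by
    rw [Nat.mul_comm m r]
    exact Nat.eq_sub_of_add_eq' hsplit
  have e1 : (univ.filter fun x : Fin (r * m) → F => frk F r m x = 0).card = Z m := (hZ m).symm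
  rw [e1, hneg]
  have hrn : r - 1 = n := rfl
  rw [hrn]
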